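/- Let X and Y be irreducible 1-step shifts of finite type over finite alphabets, Z a shift space, and φ : X → Y, ψ : Y → Z 1-block factor codes, with π = ψ ∘ φ. Then for every y ∈ Y there is a block v occurring in y whose φ/ψ-depth satisfies d_{φ/ψ}(v) ≤ d_{φ/ψ}(y). -/

import Mathlib

/- Common definitions: shift spaces over finite alphabets, 1-block factor codes,
   transition classes, class degrees, relative transition classes, relative class
   degrees, routability and depth. -/

open Set

namespace SymbDyn

variable {A B C D : Type*}

/-- The shift map `σ` on bi-infinite sequences. -/
def shift (α : Type*) : (ℤ → α) → (ℤ → α) := fun x i => x (i + 1)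

/-- The map on points induced letterwise by a symbol map (a 1-block code). -/
def sliding (Φ : A → B) : (ℤ → A) → (ℤ → B) := fun x i => Φ (x i)

/-- The block `w` occurs in the point `x` starting at coordinate `n`. -/
def OccursAt (x : ℤ → A) (w : List A) (n : ℤ) : Prop :=
  ∀ i : ℕ, i < w.length → w[i]? = some (x (n + i))

/-- The block `w` occurs somewhere in the point `x`. -/
def OccursInPoint (x : ℤ → A) (w : List A) : Prop := ∃ n : ℤ, OccursAt x w n

/-- The block `w` occurs in (a point of) the subset `X`. -/
def BlockOccursIn (X : Set (ℤ → A)) (w : List A) : Prop := ∃ x ∈ X, OccursInPoint x w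

/-- `X` is a shift space: nonempty, closed (product of discrete topologies) and
shift-invariant. -/
def IsShiftSpace [TopologicalSpace A] (X : Set (ℤ → A)) : Prop :=
  X.Nonempty ∧ IsClosed X ∧ shift A '' X = X

/-- `X` is irreducible: any two blocks of `X` can be connected inside `X`. -/
def IsIrreducibleShift (X : Set (ℤ → A)) : Prop :=
  ∀ u v : List A, BlockOccursIn X u → BlockOccursIn X v →
    ∃ t : List A, BlockOccursIn X (u ++ t ++ v)

/-- `X` is a 1-step shift of finite type: any point all of whose 2-blocks occur
in `X` lies in `X`. -/
def IsOneStepSFT (X : Set (ℤ → A)) : Prop :=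
  ∀ z : ℤ → A, (∀ i : ℤ, BlockOccursIn X [z i, z (i + 1)]) → z ∈ X

/-- `x` is right transitive in `X`: every block of `X` occurs in `x|_[0,∞)`. -/
def RightTransitive (X : Set (ℤ → A)) (x : ℤ → A) : Prop :=
  ∀ w : List A, BlockOccursIn X w → ∃ n : ℤ, 0 ≤ n ∧ OccursAt x w n

/-- `x` is left transitive in `X`: every block of `X` occurs in `x|_(-∞,0]`. -/
def LeftTransitive (X : Set (ℤ → A)) (x : ℤ → A) : Prop :=
  ∀ w : List A, BlockOccursIn X w → ∃ n : ℤ, n + w.length ≤ 1 ∧ OccursAt x w n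

/-- `x` is bi-transitive in `X`. -/
def BiTransitive (X : Set (ℤ → A)) (x : ℤ → A) : Prop :=
  RightTransitive X x ∧ LeftTransitive X x

/-- `x` is recurrent: every block of `x` occurs infinitely often to the right. -/
def Recurrent (x : ℤ → A) : Prop :=
  ∀ w : List A, OccursInPoint x w → ∀ n : ℤ, ∃ m : ℤ, n ≤ m ∧ OccursAt x w m

/-- `xb` is a `(π,m)`-bridge from `x` to `x'` (all living in `X`). -/
def IsBridge (X : Set (ℤ → A)) (π : (ℤ → A) → ℤ → C) (m : ℤ) (x x' xb : ℤ → A) : Prop :=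
  xb ∈ X ∧ (∀ i : ℤ, i ≤ m → xb i = x i) ∧
    (∃ n : ℤ, m < n ∧ ∀ i : ℤ, n ≤ i → xb i = x' i) ∧ π xb = π x

/-- `x →_π x'`: `π x = π x'` and there is a `(π,m)`-bridge from `x` to `x'`
for every `m`. -/
def TransTo (X : Set (ℤ → A)) (π : (ℤ → A) → ℤ → C) (x x' : ℤ → A) : Prop :=
  π x = π x' ∧ ∀ m : ℤ, ∃ xb, IsBridge X π m x x' xb

/-- `x ∼_π x'`. -/
def TransEquiv (X : Set (ℤ → A)) (π : (ℤ → A) → ℤ → C) (x x' : ℤ → A) : Prop :=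
  TransTo X π x x' ∧ TransTo X π x' x

/-- The `π`-transition class `[x]_π` of `x` inside `X`. -/
def transClass (X : Set (ℤ → A)) (π : (ℤ → A) → ℤ → C) (x : ℤ → A) : Set (ℤ → A) :=
  {x' | x' ∈ X ∧ TransEquiv X π x x'}

/-- The number `d_π(z)` of `π`-transition classes over the point `z`. -/
noncomputable def ptDeg (X : Set (ℤ → A)) (π : (ℤ → A) → ℤ → C) (z : ℤ → C) : ℕ∞ :=
  {S : Set (ℤ → A) | ∃ x ∈ X, π x = z ∧ S = transClass X π x}.encard

/-- The class degree `d_π = min_{z ∈ Z} d_π(z)`. -/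
noncomputable def classDeg (X : Set (ℤ → A)) (Z : Set (ℤ → C)) (π : (ℤ → A) → ℤ → C) : ℕ∞ :=
  ⨅ z ∈ Z, ptDeg X π z

/-- `xb` is a `(φ/ψ,m)`-bridge from `x` to `x'` relative to `ψ` (whose transition
relation lives on `Y`). -/
def IsRelBridge (X : Set (ℤ → A)) (Y : Set (ℤ → B)) (φ : (ℤ → A) → ℤ → B)
    (ψ : (ℤ → B) → ℤ → C) (m : ℤ) (x x' xb : ℤ → A) : Prop :=
  xb ∈ X ∧ (∀ i : ℤ, i ≤ m → xb i = x i) ∧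
    (∃ n : ℤ, m < n ∧ ∀ i : ℤ, n ≤ i → xb i = x' i) ∧ TransEquiv Y ψ (φ xb) (φ x)

/-- `x →_{φ/ψ} x'`. -/
def RelTransTo (X : Set (ℤ → A)) (Y : Set (ℤ → B)) (φ : (ℤ → A) → ℤ → B)
    (ψ : (ℤ → B) → ℤ → C) (x x' : ℤ → A) : Prop :=
  TransEquiv Y ψ (φ x) (φ x') ∧ ∀ m : ℤ, ∃ xb, IsRelBridge X Y φ ψ m x x' xb

/-- `x ∼_{φ/ψ} x'`. -/
def RelTransEquiv (X : Set (ℤ → A)) (Y : Set (ℤ → B)) (φ : (ℤ → A) → ℤ → B)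
    (ψ : (ℤ → B) → ℤ → C) (x x' : ℤ → A) : Prop :=
  RelTransTo X Y φ ψ x x' ∧ RelTransTo X Y φ ψ x' x

/-- The `φ/ψ`-transition class `[x]_{φ/ψ}` of `x`. -/
def relClass (X : Set (ℤ → A)) (Y : Set (ℤ → B)) (φ : (ℤ → A) → ℤ → B)
    (ψ : (ℤ → B) → ℤ → C) (x : ℤ → A) : Set (ℤ → A) :=
  {x' | x' ∈ X ∧ RelTransEquiv X Y φ ψ x x'}

/-- The number `d_{φ/ψ}(y)` of `φ/ψ`-transition classes over `y`. -/
noncomputable def relPtDeg (X : Set (ℤ → A)) (Y : Set (ℤ → B)) (φ : (ℤ → A) → ℤ → B)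
    (ψ : (ℤ → B) → ℤ → C) (y : ℤ → B) : ℕ∞ :=
  {S : Set (ℤ → A) | ∃ x ∈ X, φ x = y ∧ S = relClass X Y φ ψ x}.encard

/-- The class degree `d_{φ/ψ} = min_{y ∈ Y} d_{φ/ψ}(y)` of `φ` relative to `ψ`. -/
noncomputable def relClassDeg (X : Set (ℤ → A)) (Y : Set (ℤ → B)) (φ : (ℤ → A) → ℤ → B)
    (ψ : (ℤ → B) → ℤ → C) : ℕ∞ :=
  ⨅ y ∈ Y, relPtDeg X Y φ ψ y

/-- The block `x|_{[s, s+l-1]}`. -/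
def segment (x : ℤ → A) (s : ℤ) (l : ℕ) : List A := (List.range l).map fun i => x (s + i)

/-- The block `u` (of the same length as `w`) is routable through the symbol `a`
at coordinate `n` (coordinates start at 1) with respect to the 1-block code
induced by `Θ`, over the target block `w`. -/
def RoutableThru (X : Set (ℤ → A)) (Θ : A → C) (w : List C) (n : ℕ) (a : A)
    (u : List A) : Prop :=
  ∃ v : List A, BlockOccursIn X v ∧ v.length = u.length ∧ v.map Θ = w ∧
    v[0]? = u[0]? ∧ v[v.length - 1]? = u[u.length - 1]? ∧
    v[n - 1]? = some a

/-- `u` is `φ/ψ`-routable through `a` at `n` over the block `w` of `Y`. -/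
def RelRoutable (X : Set (ℤ → A)) (Φ : A → B) (Ψ : B → C) (w : List B) (n : ℕ) (a : A)
    (u : List A) : Prop :=
  RoutableThru X (Ψ ∘ Φ) (w.map Ψ) n a u

/-- The block `w` of `Y` is `φ/ψ`-presented through `M` at `n`. -/
def RelPresented (X : Set (ℤ → A)) (Φ : A → B) (Ψ : B → C) (w : List B) (n : ℕ)
    (M : Set A) : Prop :=
  ∀ u : List A, BlockOccursIn X u → u.map Φ = w → ∃ a ∈ M, RelRoutable X Φ Ψ w n a u

/-- The `φ/ψ`-depth `d_{φ/ψ}(w)` of a block `w`. -/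
noncomputable def relDepth (X : Set (ℤ → A)) (Φ : A → B) (Ψ : B → C) (w : List B) : ℕ∞ :=
  sInf {k : ℕ∞ | ∃ n : ℕ, 1 ≤ n ∧ n ≤ w.length ∧
    ∃ M : Finset A, RelPresented X Φ Ψ w n ↑M ∧ k = (M.card : ℕ∞)}

end SymbDyn

namespace SymbDyn

section AuxProof

variable {A B C : Type*}

lemma aux_segment_eq (x : ℤ → A) (s : ℤ) (l : ℕ) :
    segment x s l = (List.range l).map (fun n : ℕ => x (s + (n : ℤ))) := by
  unfold segment
  simp only [List.bind_eq_flatMap, List.pure_def]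
  rw [← List.map_eq_flatMap, List.map_map]
  rfl

lemma aux_segment_length (x : ℤ → A) (s : ℤ) (l : ℕ) : (segment x s l).length = l := by
  rw [aux_segment_eq, List.length_map, List.length_range]

lemma aux_segment_get? (x : ℤ → A) (s : ℤ) {i l : ℕ} (h : i < l) :
    (segment x s l)[i]? = some (x (s + i)) := by
  rw [aux_segment_eq]
  simp [List.getElem?_range, h]

lemma aux_occursAt_segment (x : ℤ → A) (s : ℤ) (l : ℕ) : OccursAt x (segment x s l) s := by
  intro i hi
  rw [aux_segment_length] at hi
  exact aux_segment_get? x s hi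

lemma aux_pair_occurs {X : Set (ℤ → A)} {x : ℤ → A} (hx : x ∈ X) (i : ℤ) :
    BlockOccursIn X [x i, x (i + 1)] := by
  refine ⟨x, hx, i, ?_⟩
  intro j hj
  match j with
  | 0 => simp
  | 1 => norm_num
  | (n+2) => exact absurd hj (by simp)

/-- glue two points at coordinate `c`. -/
def glue (c : ℤ) (p q : ℤ → A) : ℤ → A := fun i => if i ≤ c then p i else q i

lemma glue_left {c i : ℤ} (p q : ℤ → A) (h : i ≤ c) : glue c p q i = p i := if_pos h

lemma glue_right {c i : ℤ} (p q : ℤ → A) (h : ¬ i ≤ c) : glue c p q i = q i := if_neg h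

lemma glue_mem {X : Set (ℤ → A)} (hXsft : IsOneStepSFT X) {p q : ℤ → A} {c : ℤ}
    (hp : p ∈ X) (hq : q ∈ X) (hc : p c = q c) : glue c p q ∈ X := by
  apply hXsft
  intro i
  by_cases h1 : i + 1 ≤ c
  · rw [glue_left _ _ (by omega), glue_left _ _ h1]
    exact aux_pair_occurs hp i
  · by_cases h2 : i ≤ c
    · have hic : i = c := by omega
      rw [glue_left _ _ h2, glue_right _ _ h1, hic, hc]
      exact aux_pair_occurs hq c
    · rw [glue_right _ _ h2, glue_right _ _ h1]
      exact aux_pair_occurs hq i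

lemma shift_mem {X : Set (ℤ → A)} (hX : shift A '' X = X) {x : ℤ → A} (hx : x ∈ X) :
    ∀ j : ℤ, (fun t => x (t + j)) ∈ X := by
  have hfwd : ∀ w ∈ X, (fun t => w (t + 1)) ∈ X := by
    intro w hw
    have : shift A w ∈ shift A '' X := Set.mem_image_of_mem _ hw
    rwa [hX] at this
  have hbwd : ∀ w ∈ X, (fun t => w (t - 1)) ∈ X := by
    intro w hw
    rw [← hX] at hw
    obtain ⟨w', hw', hww'⟩ := hw
    have : (fun t : ℤ => w (t - 1)) = w' := by
      funext t
      have := congrFun hww' (t - 1)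
      simp only [shift] at this
      rw [← this]
      ring_nf
    rw [this]
    exact hw'
  intro j
  induction j using Int.induction_on with
  | zero => simpa using hx
  | succ n ih =>
      have := hfwd _ ih
      convert this using 2 with t
      ring_nf
  | pred n ih =>
      have := hbwd _ ih
      convert this using 2 with t
      ring_nf

end AuxProof

section AuxProof2

variable {A B C : Type*}

lemma aux_transEquiv_refl {Y : Set (ℤ → B)} (ψ : (ℤ → B) → ℤ → C) {w : ℤ → B} (hw : w ∈ Y) :
    TransEquiv Y ψ w w := by
  have h : TransTo Y ψ w w :=
    ⟨rfl, fun m => ⟨w, hw, fun i _ => rfl, ⟨m + 1, by omega, fun i _ => rfl⟩, rfl⟩⟩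
  exact ⟨h, h⟩

lemma aux_relTransEquiv_refl {X : Set (ℤ → A)} {Y : Set (ℤ → B)}
    (φ : (ℤ → A) → ℤ → B) (ψ : (ℤ → B) → ℤ → C)
    (hφY : ∀ x ∈ X, φ x ∈ Y) {x : ℤ → A} (hx : x ∈ X) :
    RelTransEquiv X Y φ ψ x x := by
  have ht := aux_transEquiv_refl ψ (hφY x hx)
  have h : RelTransTo X Y φ ψ x x :=
    ⟨ht, fun m => ⟨x, hx, fun i _ => rfl, ⟨m + 1, by omega, fun i _ => rfl⟩, ht⟩⟩
  exact ⟨h, h⟩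

lemma aux_continuous_sliding [TopologicalSpace A] [DiscreteTopology A] [TopologicalSpace B]
    (Φ : A → B) : Continuous (sliding Φ) :=
  continuous_pi fun i => (continuous_of_discreteTopology).comp (continuous_apply i)

lemma aux_exists_window [Finite A] [TopologicalSpace A] [DiscreteTopology A]
    (X : Set (ℤ → A)) (hXc : IsClosed X) (Φ : A → B) (y : ℤ → B) (K : ℤ) (hK : 0 ≤ K) :
    ∃ k' : ℤ, K ≤ k' ∧ ∀ x ∈ X, (∀ i : ℤ, -k' ≤ i → i ≤ k' → Φ (x i) = y i) →
      ∃ z, (z ∈ X ∧ sliding Φ z = y) ∧ z (-K) = x (-K) ∧ z K = x K := by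
  classical
  have hcompact : IsCompact X := hXc.isCompact
  have key : ∀ p q : A, (¬ ∃ z, (z ∈ X ∧ sliding Φ z = y) ∧ z (-K) = p ∧ z K = q) →
      ∃ k' : ℤ, K ≤ k' ∧ ¬ ∃ x, x ∈ X ∧ (∀ i : ℤ, -k' ≤ i → i ≤ k' → Φ (x i) = y i) ∧
        x (-K) = p ∧ x K = q := by
    intro p q hbad
    by_contra hcon
    push_neg at hcon
    have hseq : ∀ n : ℕ, ∃ x, x ∈ X ∧
        (∀ i : ℤ, -(K + n) ≤ i → i ≤ K + n → Φ (x i) = y i) ∧ x (-K) = p ∧ x K = q :=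
      fun n => hcon (K + n) (by omega)
    choose x hxX hxw hxp hxq using hseq
    have hne : (Filter.map x Filter.atTop).NeBot := Filter.map_neBot
    have hle : Filter.map x Filter.atTop ≤ Filter.principal X := by
      rw [Filter.le_principal_iff, Filter.mem_map]
      exact Filter.Eventually.of_forall hxX
    obtain ⟨z, hzX, hz⟩ := hcompact.exists_clusterPt hle
    have hfreq : ∀ (I : Finset ℤ) (N : ℕ), ∃ m : ℕ, N ≤ m ∧ ∀ i ∈ I, x m i = z i := by
      intro I N
      have hU : {w : ℤ → A | ∀ i ∈ I, w i = z i} ∈ nhds z := by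
        have hEq : {w : ℤ → A | ∀ i ∈ I, w i = z i}
            = ⋂ i ∈ I, (fun w : ℤ → A => w i) ⁻¹' {z i} := by
          ext w; simp
        rw [hEq]
        rw [Filter.biInter_finset_mem]
        intro i _
        exact (continuous_apply i).continuousAt.preimage_mem_nhds (by
          rw [mem_nhds_discrete]; exact Set.mem_singleton _)
      have hV : x '' Set.Ici N ∈ Filter.map x Filter.atTop := by
        rw [Filter.mem_map]
        exact Filter.mem_of_superset (Filter.Ici_mem_atTop N) (Set.subset_preimage_image x _)
      obtain ⟨w, hw1, hw2⟩ := clusterPt_iff_nonempty.mp hz hU hV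
      obtain ⟨m, hm, rfl⟩ := hw2
      exact ⟨m, hm, hw1⟩
    have hΦz : ∀ i : ℤ, Φ (z i) = y i := by
      intro i
      obtain ⟨m, hm, hmi⟩ := hfreq {i} i.natAbs
      have h1 : (i.natAbs : ℤ) ≤ (m : ℤ) := by exact_mod_cast hm
      have h2 : x m i = z i := hmi i (Finset.mem_singleton_self i)
      rw [← h2]
      exact hxw m i (by omega) (by omega)
    obtain ⟨m, _, hmi⟩ := hfreq {-K, K} 0
    refine hbad ⟨z, ⟨hzX, funext fun i => hΦz i⟩, ?_, ?_⟩
    · rw [← hmi (-K) (by simp), hxp]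
    · rw [← hmi K (by simp), hxq]
  have key' : ∀ pq : A × A, ∃ k' : ℤ, K ≤ k' ∧
      ((¬ ∃ z, (z ∈ X ∧ sliding Φ z = y) ∧ z (-K) = pq.1 ∧ z K = pq.2) →
        ¬ ∃ x, x ∈ X ∧ (∀ i : ℤ, -k' ≤ i → i ≤ k' → Φ (x i) = y i) ∧
          x (-K) = pq.1 ∧ x K = pq.2) := by
    intro pq
    by_cases h : ∃ z, (z ∈ X ∧ sliding Φ z = y) ∧ z (-K) = pq.1 ∧ z K = pq.2
    · exact ⟨K, le_refl K, fun hb => absurd h hb⟩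
    · obtain ⟨k', h1, h2⟩ := key pq.1 pq.2 h
      exact ⟨k', h1, fun _ => h2⟩
  choose f hfK hfP using key'
  have : Fintype A := Fintype.ofFinite A
  set s : Finset ℤ := insert K ((Finset.univ : Finset (A × A)).image f) with hs
  have hsne : s.Nonempty := ⟨K, Finset.mem_insert_self _ _⟩
  refine ⟨s.max' hsne, Finset.le_max' s K (Finset.mem_insert_self _ _), ?_⟩
  intro x hx hwin
  by_contra hno
  have hfle : f (x (-K), x K) ≤ s.max' hsne :=
    Finset.le_max' s _ (Finset.mem_insert_of_mem (Finset.mem_image_of_mem f (Finset.mem_univ _)))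
  exact hfP (x (-K), x K) hno
    ⟨x, hx, fun i h1 h2 => hwin i (by omega) (by omega), rfl, rfl⟩

end AuxProof2


theorem exists_block_relDepth_le
    {A B C : Type*} [Fintype A] [Fintype B] [Fintype C]
    [TopologicalSpace A] [DiscreteTopology A]
    [TopologicalSpace B] [DiscreteTopology B]
    [TopologicalSpace C] [DiscreteTopology C]
    (X : Set (ℤ → A)) (Y : Set (ℤ → B)) (Z : Set (ℤ → C))
    (hX : IsShiftSpace X) (hXirr : IsIrreducibleShift X) (hXsft : IsOneStepSFT X)
    (hY : IsShiftSpace Y) (hYirr : IsIrreducibleShift Y) (hYsft : IsOneStepSFT Y)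
    (hZ : IsShiftSpace Z)
    (Φ : A → B) (Ψ : B → C)
    (hφ : sliding Φ '' X = Y) (hψ : sliding Ψ '' Y = Z)
    (y : ℤ → B) (hy : y ∈ Y) :
    ∃ v : List B, OccursInPoint y v ∧
      relDepth X Φ Ψ v ≤ relPtDeg X Y (sliding Φ) (sliding Ψ) y := by
  classical
  by_cases htop : relPtDeg X Y (sliding Φ) (sliding Ψ) y = ⊤
  · refine ⟨[y 0], ⟨0, ?_⟩, ?_⟩
    · intro i hi
      simp only [List.length_singleton] at hi
      match i with
      | 0 => simp
    · rw [htop]; exact le_top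
  -- Notation and basic facts
  have hφY : ∀ x ∈ X, sliding Φ x ∈ Y := fun x hx => hφ ▸ Set.mem_image_of_mem _ hx
  have hXc : IsClosed X := hX.2.1
  have hXsh : shift A '' X = X := hX.2.2
  obtain ⟨x₀, hx₀X⟩ := hX.1
  set 𝒮 : Set (Set (ℤ → A)) :=
    {S | ∃ x ∈ X, sliding Φ x = y ∧ S = relClass X Y (sliding Φ) (sliding Ψ) x} with h𝒮
  have h𝒮enc : 𝒮.encard = relPtDeg X Y (sliding Φ) (sliding Ψ) y := rfl
  have h𝒮fin : 𝒮.Finite := by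
    rw [← Set.encard_ne_top_iff, h𝒮enc]
    exact htop
  -- representatives
  have hrepex : ∀ S : Set (ℤ → A), ∃ x, S ∈ 𝒮 →
      x ∈ X ∧ sliding Φ x = y ∧ S = relClass X Y (sliding Φ) (sliding Ψ) x := by
    intro S
    by_cases h : S ∈ 𝒮
    · obtain ⟨x, hx1, hx2, hx3⟩ := h
      exact ⟨x, fun _ => ⟨hx1, hx2, hx3⟩⟩
    · exact ⟨x₀, fun hS => absurd hS h⟩
  choose rep hrep using hrepex
  -- class data
  have hzclass : ∀ z, z ∈ X → sliding Φ z = y →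
      relClass X Y (sliding Φ) (sliding Ψ) z ∈ 𝒮 ∧
      RelTransEquiv X Y (sliding Φ) (sliding Ψ)
        (rep (relClass X Y (sliding Φ) (sliding Ψ) z)) z := by
    intro z hzX hzy
    have hmem : relClass X Y (sliding Φ) (sliding Ψ) z ∈ 𝒮 := ⟨z, hzX, hzy, rfl⟩
    have hrefl : z ∈ relClass X Y (sliding Φ) (sliding Ψ) z :=
      ⟨hzX, aux_relTransEquiv_refl _ _ hφY hzX⟩
    have heq := (hrep _ hmem).2.2
    rw [heq] at hrefl
    exact ⟨hmem, hrefl.2⟩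
  -- uniform left bridges (with transfer built in)
  have hgapex : ∀ p : Set (ℤ → A) × A, ∃ n₁ : ℤ, 0 < n₁ ∧
      ((∃ ζ, ζ ∈ X ∧ sliding Φ ζ = y ∧ relClass X Y (sliding Φ) (sliding Ψ) ζ = p.1 ∧
          ζ 0 = p.2) →
        ∀ z', z' ∈ X → sliding Φ z' = y → z' 0 = p.2 →
          ∃ b, b ∈ X ∧ (∀ i : ℤ, i ≤ 0 → b i = z' i) ∧
            (∀ i : ℤ, n₁ ≤ i → b i = rep p.1 i) ∧ (∀ i : ℤ, Ψ (Φ (b i)) = Ψ (y i))) := by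
    intro p
    by_cases h : ∃ ζ, ζ ∈ X ∧ sliding Φ ζ = y ∧
        relClass X Y (sliding Φ) (sliding Ψ) ζ = p.1 ∧ ζ 0 = p.2
    · obtain ⟨ζ, hζX, hζy, hζcl, hζ0⟩ := h
      obtain ⟨_, hequiv⟩ := hzclass ζ hζX hζy
      obtain ⟨xb, hxbX, hxb1, ⟨n₁, hn₁, hxb2⟩, hxb3⟩ := hequiv.2.2 0
      have hxbψ : ∀ i : ℤ, Ψ (Φ (xb i)) = Ψ (Φ (ζ i)) := fun i => congrFun hxb3.1.1 i
      refine ⟨n₁, hn₁, fun _ z' hz'X hz'y hz'0 => ?_⟩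
      refine ⟨glue 0 z' xb, glue_mem hXsft hz'X hxbX ?_, ?_, ?_, ?_⟩
      · rw [hxb1 0 le_rfl, hζ0, hz'0]
      · intro i hi; exact glue_left _ _ hi
      · intro i hi
        rw [glue_right _ _ (by omega), hxb2 i hi, hζcl]
      · intro i
        by_cases hi : i ≤ 0
        · rw [glue_left _ _ hi]
          exact congrArg Ψ (congrFun hz'y i)
        · rw [glue_right _ _ hi, hxbψ i]
          exact congrArg Ψ (congrFun hζy i)
    · exact ⟨1, one_pos, fun hw => absurd hw h⟩
  choose gap hgap_pos hgap using hgapex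
  -- the common left coordinate c
  set pairs : Finset (Set (ℤ → A) × A) := h𝒮fin.toFinset ×ˢ Finset.univ with hpairs
  set cs : Finset ℤ := insert 1 (pairs.image gap) with hcs
  have hcsne : cs.Nonempty := ⟨1, Finset.mem_insert_self _ _⟩
  set c : ℤ := cs.max' hcsne with hc
  have hc1 : 1 ≤ c := Finset.le_max' cs 1 (Finset.mem_insert_self _ _)
  have hcgap : ∀ p ∈ pairs, gap p ≤ c := fun p hp =>
    Finset.le_max' cs _ (Finset.mem_insert_of_mem (Finset.mem_image_of_mem gap hp))
  -- right bridges
  have hRBex : ∀ z : ℤ → A, ∃ r : ℤ, c < r ∧ ((z ∈ X ∧ sliding Φ z = y) →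
      ∃ b, b ∈ X ∧ (∀ i : ℤ, i ≤ c → b i = rep (relClass X Y (sliding Φ) (sliding Ψ) z) i) ∧
        (∀ i : ℤ, r ≤ i → b i = z i) ∧ (∀ i : ℤ, Ψ (Φ (b i)) = Ψ (y i))) := by
    intro z
    by_cases hz : z ∈ X ∧ sliding Φ z = y
    · obtain ⟨hmem, hequiv⟩ := hzclass z hz.1 hz.2
      obtain ⟨xb, hxbX, hxb1, ⟨n₂, hn₂, hxb2⟩, hxb3⟩ := hequiv.1.2 c
      have hxbψ : ∀ i : ℤ, Ψ (Φ (xb i)) = Ψ (Φ (rep (relClass X Y (sliding Φ) (sliding Ψ) z) i)) :=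
        fun i => congrFun hxb3.1.1 i
      have hrepy := (hrep _ hmem).2.1
      refine ⟨n₂, hn₂, fun _ => ⟨xb, hxbX, hxb1, hxb2, fun i => ?_⟩⟩
      rw [hxbψ i]
      exact congrArg Ψ (congrFun hrepy i)
    · exact ⟨c + 1, by omega, fun h => absurd h hz⟩
  choose r hrc hrb using hRBex
  -- the fiber and its compactness
  set Fib : Set (ℤ → A) := {z | z ∈ X ∧ sliding Φ z = y} with hFibdef
  have hFibc : IsClosed Fib := by
    have hEq : Fib = X ∩ (sliding Φ) ⁻¹' {y} := by
      ext z
      simp [hFibdef, Set.mem_inter_iff, Set.mem_preimage]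
    rw [hEq]
    exact hXc.inter (IsClosed.preimage (aux_continuous_sliding Φ) isClosed_singleton)
  have hFibcpt : IsCompact Fib := hFibc.isCompact
  set U : {w : ℤ → A // w ∈ Fib} → Set (ℤ → A) :=
    fun z => {w | w 0 = z.1 0 ∧ w (r z.1) = z.1 (r z.1)} with hU
  have hUo : ∀ z, IsOpen (U z) := by
    intro z
    have hEq : U z = (fun w : ℤ → A => w 0) ⁻¹' {z.1 0} ∩
        (fun w : ℤ → A => w (r z.1)) ⁻¹' {z.1 (r z.1)} := rfl
    rw [hEq]
    exact ((continuous_apply (0 : ℤ)).isOpen_preimage _ (isOpen_discrete _)).inter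
      ((continuous_apply (r z.1)).isOpen_preimage _ (isOpen_discrete _))
  have hcov : Fib ⊆ ⋃ z, U z := fun w hw => Set.mem_iUnion.mpr ⟨⟨w, hw⟩, rfl, rfl⟩
  obtain ⟨t, ht⟩ := hFibcpt.elim_finite_subcover U hUo hcov
  -- the uniform right coordinate K
  set Ks : Finset ℤ := insert (c + 1) (t.image (fun z => r z.1)) with hKs
  have hKsne : Ks.Nonempty := ⟨c + 1, Finset.mem_insert_self _ _⟩
  set K : ℤ := Ks.max' hKsne with hKdef
  have hcK : c < K := by
    have := Finset.le_max' Ks (c + 1) (Finset.mem_insert_self _ _)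
    omega
  have hKr : ∀ z ∈ t, r z.1 ≤ K := fun z hz =>
    Finset.le_max' Ks _ (Finset.mem_insert_of_mem (Finset.mem_image_of_mem _ hz))
  -- the routing symbol set
  set M : Finset A := h𝒮fin.toFinset.image (fun S => rep S c) with hM
  -- the master routing statement
  have STAR : ∀ z', z' ∈ X → sliding Φ z' = y → ∃ a ∈ M, ∃ g, g ∈ X ∧
      (∀ i : ℤ, i ≤ 0 → g i = z' i) ∧ g c = a ∧ (∀ i : ℤ, K ≤ i → g i = z' i) ∧
      (∀ i : ℤ, Ψ (Φ (g i)) = Ψ (y i)) := by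
    intro z' h1 h2
    have hz'F : z' ∈ Fib := ⟨h1, h2⟩
    obtain ⟨z, hzt, hzU⟩ := Set.mem_iUnion₂.mp (ht hz'F)
    obtain ⟨hz0, hzr⟩ := hzU
    have hzX : z.1 ∈ X := z.2.1
    have hzy : sliding Φ z.1 = y := z.2.2
    have hzmem : relClass X Y (sliding Φ) (sliding Ψ) z.1 ∈ 𝒮 := (hzclass z.1 hzX hzy).1
    set p : Set (ℤ → A) × A := (relClass X Y (sliding Φ) (sliding Ψ) z.1, z.1 0) with hp
    have hppairs : p ∈ pairs := by
      rw [hpairs, Finset.mem_product]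
      exact ⟨Set.Finite.mem_toFinset _ |>.mpr hzmem, Finset.mem_univ _⟩
    obtain ⟨bL, hbLX, hbL1, hbL2, hbL3⟩ :=
      hgap p ⟨z.1, hzX, hzy, rfl, rfl⟩ z' h1 h2 hz0
    obtain ⟨bR, hbRX, hbR1, hbR2, hbR3⟩ := hrb z.1 ⟨hzX, hzy⟩
    set g : ℤ → A := glue c bL (glue (r z.1) bR z') with hg
    have hbLc : bL c = rep p.1 c := hbL2 c (le_trans (hcgap p hppairs) le_rfl)
    have hseam2 : bR (r z.1) = z' (r z.1) := by rw [hbR2 (r z.1) le_rfl, hzr]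
    have hRin : glue (r z.1) bR z' ∈ X := glue_mem hXsft hbRX h1 hseam2
    have hgseam : bL c = glue (r z.1) bR z' c := by
      rw [glue_left _ _ (le_of_lt (hrc z.1)), hbLc, hbR1 c le_rfl]
    have hgX : g ∈ X := glue_mem hXsft hbLX hRin hgseam
    have hgL : ∀ i : ℤ, i ≤ c → g i = bL i := by
      intro i hi
      rw [hg]
      exact glue_left _ _ hi
    have hgR : ∀ i : ℤ, ¬ i ≤ c → g i = glue (r z.1) bR z' i := by
      intro i hi
      rw [hg]
      exact glue_right _ _ hi
    refine ⟨rep p.1 c, Finset.mem_image_of_mem _ (Set.Finite.mem_toFinset _ |>.mpr hzmem),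
      g, hgX, ?_, ?_, ?_, ?_⟩
    · intro i hi
      rw [hgL i (by omega)]
      exact hbL1 i hi
    · rw [hgL c le_rfl, hbLc]
    · intro i hi
      rw [hgR i (by omega)]
      by_cases hir : i ≤ r z.1
      · have hieq : i = r z.1 := by
          have := hKr z hzt
          omega
        rw [glue_left _ _ hir, hieq]
        exact hseam2
      · exact glue_right _ _ hir
    · intro i
      by_cases hic : i ≤ c
      · rw [hgL i hic]
        exact hbL3 i
      · rw [hgR i hic]
        by_cases hir : i ≤ r z.1
        · rw [glue_left _ _ hir]
          exact hbR3 i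
        · rw [glue_right _ _ hir]
          exact congrArg Ψ (congrFun h2 i)
  -- window stabilization
  have hK0 : 0 ≤ K := by omega
  obtain ⟨k', hk'K, hwin⟩ := aux_exists_window X hXc Φ y K hK0
  have hck' : c < k' := by omega
  -- the block and position
  set l : ℕ := (2 * k' + 1).toNat with hldef
  have hl : (l : ℤ) = 2 * k' + 1 := Int.toNat_of_nonneg (by omega)
  set n : ℕ := (c + k' + 1).toNat with hndef
  have hn : (n : ℤ) = c + k' + 1 := Int.toNat_of_nonneg (by omega)
  set v : List B := segment y (-k') l with hv
  refine ⟨v, ⟨-k', aux_occursAt_segment y (-k') l⟩, ?_⟩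
  have hMcard : (M.card : ℕ∞) ≤ relPtDeg X Y (sliding Φ) (sliding Ψ) y := by
    rw [← h𝒮enc, Set.Finite.encard_eq_coe_toFinset_card h𝒮fin]
    exact Nat.cast_le.mpr Finset.card_image_le
  refine le_trans (sInf_le ?_) hMcard
  refine ⟨n, by omega, ?_, M, ?_, rfl⟩
  · rw [hv, aux_segment_length]
    omega
  -- RelPresented
  intro u hu humap
  have hul : u.length = l := by
    have := congrArg List.length humap
    rw [List.length_map, hv, aux_segment_length] at this
    exact this
  obtain ⟨x₁, hx₁X, s, hocc⟩ := hu
  set x₂ : ℤ → A := fun t => x₁ (t + (s + k')) with hx₂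
  have hx₂X : x₂ ∈ X := shift_mem hXsh hx₁X (s + k')
  have hx₂u : ∀ i : ℕ, i < l → u[i]? = some (x₂ (-k' + i)) := by
    intro i hi
    rw [hocc i (by omega)]
    congr 1
    show x₁ (s + i) = x₁ (-k' + i + (s + k'))
    congr 1
    ring
  have hx₂w : ∀ i : ℤ, -k' ≤ i → i ≤ k' → Φ (x₂ i) = y i := by
    intro i h1 h2
    set j : ℕ := (i + k').toNat with hjdef
    have hjz : (j : ℤ) = i + k' := Int.toNat_of_nonneg (by omega)
    have hjl : j < l := by omega
    have h3 := congrArg (fun L => L[j]?) humap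
    simp only [List.getElem?_map] at h3
    rw [hx₂u j hjl, hv, aux_segment_get? y (-k') hjl] at h3
    simp only [Option.map_some] at h3
    have hcoord : -k' + (j : ℤ) = i := by omega
    rw [hcoord] at h3
    exact Option.some.inj h3
  obtain ⟨z', ⟨hz'X, hz'y⟩, hz'm, hz'p⟩ := hwin x₂ hx₂X hx₂w
  obtain ⟨a, haM, g, hgX, hg1, hgc, hgK, hgψ⟩ := STAR z' hz'X hz'y
  set wt : ℤ → A := glue K (glue (-K) x₂ g) x₂ with hwt
  have hinner : glue (-K) x₂ g ∈ X := by
    refine glue_mem hXsft hx₂X hgX ?_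
    rw [hg1 (-K) (by omega), hz'm]
  have hwtX : wt ∈ X := by
    refine glue_mem hXsft hinner hx₂X ?_
    rw [glue_right x₂ g (show ¬ (K : ℤ) ≤ -K from by omega), hgK K le_rfl, hz'p]
  have hwtm : ∀ i : ℤ, i ≤ -K → wt i = x₂ i := by
    intro i hi
    rw [hwt, glue_left _ _ (show i ≤ K from by omega)]
    exact glue_left _ _ hi
  have hwtmid : ∀ i : ℤ, -K < i → i ≤ K → wt i = g i := by
    intro i h1 h2
    rw [hwt, glue_left _ _ h2]
    exact glue_right _ _ (show ¬ i ≤ -K from by omega)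
  have hwtp : ∀ i : ℤ, K < i → wt i = x₂ i := by
    intro i hi
    rw [hwt]
    exact glue_right _ _ (show ¬ i ≤ K from by omega)
  have hwtk' : wt k' = x₂ k' := by
    by_cases h : K < k'
    · exact hwtp k' h
    · have hkK : k' = K := by omega
      rw [hwtmid k' (by omega) (by omega), hkK, hgK K le_rfl, hz'p]
  have hwtΨ : ∀ i : ℤ, -k' ≤ i → i ≤ k' → Ψ (Φ (wt i)) = Ψ (y i) := by
    intro i h1 h2
    by_cases ha : i ≤ -K
    · rw [hwtm i ha, hx₂w i h1 h2]
    · by_cases hb : i ≤ K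
      · rw [hwtmid i (by omega) hb]
        exact hgψ i
      · rw [hwtp i (by omega), hx₂w i h1 h2]
  set vr : List A := segment wt (-k') l with hvr
  have hvrl : vr.length = l := aux_segment_length _ _ _
  refine ⟨a, haM, vr, ⟨wt, hwtX, -k', aux_occursAt_segment _ _ _⟩, by rw [hvrl, hul], ?_, ?_, ?_, ?_⟩
  · -- vr.map (Ψ ∘ Φ) = v.map Ψ
    apply List.ext_getElem?
    intro i
    by_cases hi : i < l
    · rw [List.getElem?_map, List.getElem?_map, hvr, hv, aux_segment_get? wt (-k') hi,
        aux_segment_get? y (-k') hi]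
      simp only [Option.map_some]
      exact congrArg some (hwtΨ (-k' + i) (by omega) (by omega))
    · rw [List.getElem?_eq_none, List.getElem?_eq_none]
      · simp only [List.length_map, hvrl, hv, aux_segment_length]; omega
      · simp only [List.length_map, hvrl, hv, aux_segment_length]; omega
  · -- first symbol
    have hl0 : 0 < l := by omega
    rw [hvr, aux_segment_get? wt (-k') hl0, hx₂u 0 hl0]
    refine congrArg some ?_
    have h0 : -k' + ((0 : ℕ) : ℤ) = -k' := by simp
    rw [h0]
    exact hwtm (-k') (by omega)
  · -- last symbol
    rw [hvrl, hul]
    have hll : l - 1 < l := by omega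
    rw [hvr, aux_segment_get? wt (-k') hll, hx₂u (l - 1) hll]
    refine congrArg some ?_
    have hco : -k' + ((l - 1 : ℕ) : ℤ) = k' := by omega
    rw [hco]
    exact hwtk'
  · -- the routing symbol
    have hnl : n - 1 < l := by omega
    rw [hvr, aux_segment_get? wt (-k') hnl]
    have hco : -k' + ((n - 1 : ℕ) : ℤ) = c := by omega
    rw [hco]
    refine congrArg some ?_
    rw [hwtmid c (by omega) (by omega)]
    exact hgc

end SymbDyn
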